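/- Let p and q be probability distributions on a finite set 𝒴, with Shannon entropies H(p) = −Σ_y p(y)·log p(y) and H(q) = −Σ_y q(y)·log q(y). Then |H(p) − H(q)| ≤ Σ_y h(|p(y) − q(y)|), where h(0) = 0, h(x) = x·log(1/x) for 0 < x ≤ 1/e, and h(x) = 1/e for x > 1/e. -/

import Mathlib

open Finset

noncomputable def hFun (x : ℝ) : ℝ :=
  if x = 0 then 0
  else if x ≤ 1 / Real.exp 1 then x * Real.log (1 / x)
  else 1 / Real.exp 1

lemma xlogx_bounds (x : ℝ) (hx : 0 ≤ x) (hx1 : x ≤ 1) :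
    x * Real.log x ≤ 0 ∧ -(1 / Real.exp 1) ≤ x * Real.log x := by
  constructor
  · exact mul_nonpos_of_nonneg_of_nonpos hx (Real.log_nonpos hx hx1)
  · rcases eq_or_lt_of_le hx with h | h
    · simp [← h]; positivity
    · have he : (0:ℝ) < Real.exp 1 := Real.exp_pos 1
      have h1 : Real.log (1/(Real.exp 1 * x)) ≤ 1/(Real.exp 1 * x) - 1 :=
        Real.log_le_sub_one_of_pos (by positivity)
      rw [one_div, Real.log_inv, Real.log_mul (ne_of_gt he) (ne_of_gt h),
        Real.log_exp] at h1
      have h2 : -Real.log x ≤ (Real.exp 1 * x)⁻¹ := by linarith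
      have h3 : x * (-Real.log x) ≤ x * (Real.exp 1 * x)⁻¹ :=
        mul_le_mul_of_nonneg_left h2 hx
      have h4 : x * (Real.exp 1 * x)⁻¹ = 1 / Real.exp 1 := by
        field_simp
      nlinarith

lemma key' (a b : ℝ) (ha : 0 ≤ a) (hab : a ≤ b) (hb1 : b ≤ 1) :
    |a * Real.log a - b * Real.log b| ≤ hFun (b - a) := by
  rcases eq_or_lt_of_le hab with rfl | hlt
  · simp [hFun]
  · set d := b - a with hd
    have hd0 : 0 < d := by simp [hd]; linarith
    have hb0 : 0 < b := lt_of_le_of_lt ha hlt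
    have hlogb : Real.log b ≤ 0 := Real.log_nonpos (le_of_lt hb0) hb1
    -- b log b - a log a ≤ d  (B)
    have hB : b * Real.log b - a * Real.log a ≤ d := by
      rcases eq_or_lt_of_le ha with h0 | h0
      · have : b * Real.log b ≤ 0 := mul_nonpos_of_nonneg_of_nonpos (le_of_lt hb0) hlogb
        simp [← h0] at *; linarith
      · have h1 : b * Real.log b ≤ a * Real.log b :=
          mul_le_mul_of_nonpos_right hab hlogb
        have h2 : Real.log (b / a) ≤ b / a - 1 :=
          Real.log_le_sub_one_of_pos (by positivity)
        rw [Real.log_div (ne_of_gt hb0) (ne_of_gt h0)] at h2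
        have h3 : a * (Real.log b - Real.log a) ≤ a * (b / a - 1) :=
          mul_le_mul_of_nonneg_left h2 ha
        have h4 : a * (b / a - 1) = b - a := by field_simp
        nlinarith
    rw [hFun, if_neg (ne_of_gt hd0)]
    by_cases hde : d ≤ 1 / Real.exp 1
    · rw [if_pos hde, one_div, Real.log_inv]
      -- d ≤ -d log d
      have hld : Real.log d ≤ -1 := by
        have := Real.log_le_log (by positivity : (0:ℝ) < d) hde
        rwa [one_div, ← Real.exp_neg, Real.log_exp] at this
      have hdd : d ≤ d * -Real.log d := by nlinarith
      -- (A): a log a - b log b ≤ -d log d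
      have hA : a * Real.log a - b * Real.log b ≤ d * -Real.log d := by
        have h1 : a * Real.log a ≤ a * Real.log b := by
          rcases eq_or_lt_of_le ha with h0 | h0
          · simp [← h0]
          · exact mul_le_mul_of_nonneg_left
              (Real.log_le_log h0 hab) ha
        have h2 : d * Real.log d ≤ d * Real.log b := by
          have hdb : d ≤ b := by simp [hd]; linarith
          exact mul_le_mul_of_nonneg_left (Real.log_le_log hd0 hdb) (le_of_lt hd0)
        have h3 : a * Real.log b + d * Real.log b = b * Real.log b := by
          rw [hd]; ring
        nlinarith
      rw [abs_le]
      constructor <;> nlinarith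
    · rw [if_neg hde]
      obtain ⟨ha1, ha2⟩ := xlogx_bounds a ha (le_trans hab hb1)
      obtain ⟨hb1', hb2⟩ := xlogx_bounds b (le_of_lt hb0) hb1
      rw [abs_le]
      constructor <;> linarith

lemma key (a b : ℝ) (ha : 0 ≤ a) (ha1 : a ≤ 1) (hb : 0 ≤ b) (hb1 : b ≤ 1) :
    |a * Real.log a - b * Real.log b| ≤ hFun |a - b| := by
  rcases le_total a b with h | h
  · rw [abs_sub_comm a b, abs_of_nonneg (by linarith : (0:ℝ) ≤ b - a)]
    exact key' a b ha h hb1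
  · rw [abs_of_nonneg (by linarith : (0:ℝ) ≤ a - b), abs_sub_comm]
    exact key' b a hb h ha1

theorem stmt_13 {YT : Type} [Fintype YT]
    (p q : YT → ℝ)
    (hp0 : ∀ y, 0 ≤ p y) (hp1 : (∑ y, p y) = 1)
    (hq0 : ∀ y, 0 ≤ q y) (hq1 : (∑ y, q y) = 1) :
    |(-∑ y, p y * Real.log (p y)) - (-∑ y, q y * Real.log (q y))| ≤
      ∑ y, hFun |p y - q y| := by
  have hrw : (-∑ y, p y * Real.log (p y)) - (-∑ y, q y * Real.log (q y)) =
      ∑ y, (q y * Real.log (q y) - p y * Real.log (p y)) := by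
    rw [Finset.sum_sub_distrib]; ring
  rw [hrw]
  calc |∑ y, (q y * Real.log (q y) - p y * Real.log (p y))|
      ≤ ∑ y, |q y * Real.log (q y) - p y * Real.log (p y)| :=
        Finset.abs_sum_le_sum_abs _ _
    _ ≤ ∑ y, hFun |p y - q y| := by
        apply Finset.sum_le_sum
        intro y _
        rw [abs_sub_comm]
        exact key (p y) (q y) (hp0 y)
          (hp1 ▸ Finset.single_le_sum (fun i _ => hp0 i) (Finset.mem_univ y))
          (hq0 y)
          (hq1 ▸ Finset.single_le_sum (fun i _ => hq0 i) (Finset.mem_univ y))
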